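/- Let p_sat > 0 be the probability that a formula drawn from D_R(m,n,k) is satisfiable. Let S be any set of satisfiable formulas with exactly m clauses and k literals per clause, and let p_γ ∈ [0,1]. If Pr_{(φ,a) ∼ D_pa(m,n,k)}[φ ∈ S] ≤ p_γ, then Pr_{φ ∼ D_S(m,n,k)}[φ ∈ S] ≤ p_γ · 2^n · e^{−m/2^k} / p_sat. -/

import Mathlib

open scoped Classical
open Finset

/-- An assignment of `n` Boolean variables. -/
abbrev Assignment (n : ℕ) := Fin n → Bool

/-- A clause: an ordered `k`-tuple of literals, each a variable index together with a sign. -/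
abbrev Clause (n k : ℕ) := Fin k → Fin n × Bool

/-- A formula: an ordered `m`-tuple of clauses. -/
abbrev Formula (n k m : ℕ) := Fin m → Clause n k

/-- An assignment satisfies a clause if it satisfies at least one literal of the clause. -/
def SatClause {n k : ℕ} (v : Assignment n) (c : Clause n k) : Prop :=
  ∃ i, v (c i).1 = (c i).2

/-- An assignment satisfies a formula if it satisfies every clause. -/
def SatFormula {n k m : ℕ} (v : Assignment n) (φ : Formula n k m) : Prop :=
  ∀ j, SatClause v (φ j)

/-- The number of clauses of `φ` satisfied by `v`. -/
noncomputable def numSat {n k m : ℕ} (φ : Formula n k m) (v : Assignment n) : ℕ :=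
  (Finset.univ.filter fun j => SatClause v (φ j)).card

/-- The number of clauses of `φ` left unsatisfied by `v`. -/
noncomputable def numUnsat {n k m : ℕ} (φ : Formula n k m) (v : Assignment n) : ℕ :=
  (Finset.univ.filter fun j => ¬ SatClause v (φ j)).card

lemma card_unsat_lit (n : ℕ) (a : Assignment n) :
    Fintype.card {l : Fin n × Bool // ¬ a l.1 = l.2} = n := by
  have e : {l : Fin n × Bool // ¬ a l.1 = l.2} ≃ Fin n :=
    { toFun := fun l => l.1.1
      invFun := fun v => ⟨(v, !a v), by simp⟩
      left_inv := fun l => by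
        obtain ⟨⟨v, b⟩, h⟩ := l
        refine Subtype.ext ?_
        revert h; cases b <;> simp
      right_inv := fun v => rfl }
  simp [Fintype.card_congr e]

lemma card_unsat_clause (n k : ℕ) (a : Assignment n) :
    Fintype.card {c : Clause n k // ¬ SatClause a c} = n ^ k := by
  have e1 : ∀ c : Clause n k, (¬ SatClause a c) ↔ ∀ i, ¬ a (c i).1 = (c i).2 := by
    intro c; simp [SatClause]
  rw [Fintype.card_congr ((Equiv.subtypeEquivRight e1).trans (Equiv.subtypePiEquivPi (p := fun _ (l : Fin n × Bool) => ¬ a l.1 = l.2)))]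
  rw [Fintype.card_pi]
  simp only [card_unsat_lit]
  simp

lemma card_sat_clause (n k : ℕ) (a : Assignment n) :
    Fintype.card {c : Clause n k // SatClause a c} = (2*n) ^ k - n ^ k := by
  have h := Fintype.card_subtype_compl (fun c : Clause n k => ¬ SatClause a c)
  simp only [not_not] at h
  rw [h, card_unsat_clause]
  congr 1
  simp [Fintype.card_fun, Fintype.card_prod, mul_comm]

lemma card_sat_formula (n k m : ℕ) (a : Assignment n) :
    Fintype.card {φ : Formula n k m // SatFormula a φ} = ((2*n) ^ k - n ^ k) ^ m := by
  have e1 : ∀ φ : Formula n k m, SatFormula a φ ↔ ∀ j, SatClause a (φ j) := fun _ => Iff.rfl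
  rw [Fintype.card_congr ((Equiv.subtypeEquivRight e1).trans (Equiv.subtypePiEquivPi (p := fun _ (c : Clause n k) => SatClause a c)))]
  rw [Fintype.card_pi]
  simp only [card_sat_clause]
  simp

lemma card_pairs (n k m : ℕ) :
    ((univ : Finset (Formula n k m × Assignment n)).filter fun p =>
        SatFormula p.2 p.1).card = 2 ^ n * ((2*n) ^ k - n ^ k) ^ m := by
  rw [Finset.card_filter, Fintype.sum_prod_type, Finset.sum_comm]
  have h : ∀ a : Assignment n,
      (∑ φ : Formula n k m, if SatFormula a φ then 1 else 0) = ((2*n) ^ k - n ^ k) ^ m := by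
    intro a
    rw [← Finset.card_filter, ← Fintype.card_subtype, card_sat_formula]
  simp only [h, Finset.sum_const, Finset.card_univ, smul_eq_mul, mul_one]
  congr 1
  simp [Fintype.card_fun]

/-- Let `p_sat > 0` be the probability that a uniformly random formula with
`m` clauses is satisfiable.  Let `S` be any set of satisfiable formulas with `m` clauses and
`p_γ ∈ [0,1]`.  If, for `(φ,a)` drawn uniformly among pairs of a formula and a satisfying
assignment, `Pr[φ ∈ S] ≤ p_γ`, then for `φ` drawn uniformly among satisfiable formulas,
`Pr[φ ∈ S] ≤ p_γ·2^n·e^{−m/2^k}/p_sat`. -/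
theorem planted_to_satisfiable (n k m : ℕ) (hn : 0 < n) (hk : 0 < k) (hm : 0 < m)
    (psat : ℝ)
    (hpsat : psat = (((univ : Finset (Formula n k m)).filter fun φ =>
        ∃ a : Assignment n, SatFormula a φ).card : ℝ) / (Fintype.card (Formula n k m) : ℝ))
    (hpsat0 : 0 < psat)
    (S : Finset (Formula n k m)) (hsat : ∀ φ ∈ S, ∃ a : Assignment n, SatFormula a φ)
    (pγ : ℝ) (hpγ0 : 0 ≤ pγ) (hpγ1 : pγ ≤ 1)
    (hplanted :
      ((((univ : Finset (Formula n k m × Assignment n)).filter fun p =>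
          SatFormula p.2 p.1 ∧ p.1 ∈ S).card : ℝ)
        / (((univ : Finset (Formula n k m × Assignment n)).filter fun p =>
          SatFormula p.2 p.1).card : ℝ)) ≤ pγ) :
    (S.card : ℝ) / (((univ : Finset (Formula n k m)).filter fun φ =>
        ∃ a : Assignment n, SatFormula a φ).card : ℝ)
      ≤ pγ * 2 ^ n * Real.exp (-(m : ℝ) / 2 ^ k) / psat := by
  set Sat := (univ : Finset (Formula n k m)).filter fun φ =>
      ∃ a : Assignment n, SatFormula a φ with hSatdef
  set N := Fintype.card (Formula n k m) with hNdef
  -- basic positivity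
  have hnk : n ^ k < (2*n) ^ k :=
    Nat.pow_lt_pow_left (by omega) hk.ne'
  have hnkle : n ^ k ≤ (2*n) ^ k := hnk.le
  have hBpos : 0 < 2 ^ n * ((2*n) ^ k - n ^ k) ^ m := by
    have : 0 < (2*n) ^ k - n ^ k := by omega
    positivity
  have hNval : N = ((2*n) ^ k) ^ m := by
    simp [hNdef, Fintype.card_fun, Fintype.card_prod, mul_comm, pow_mul]
  have hNpos : 0 < N := by rw [hNval]; positivity
  -- Sat is positive
  have hSatpos : 0 < (Sat.card : ℝ) := by
    by_contra h
    push_neg at h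
    have h0 : (Sat.card : ℝ) = 0 := le_antisymm h (by positivity)
    rw [hpsat, h0, zero_div] at hpsat0
    exact lt_irrefl 0 hpsat0
  -- injection from S into satisfying pairs in S
  have hS_le_A : (S.card : ℝ) ≤
      (((univ : Finset (Formula n k m × Assignment n)).filter fun p =>
          SatFormula p.2 p.1 ∧ p.1 ∈ S).card : ℝ) := by
    have : S.card ≤ ((univ : Finset (Formula n k m × Assignment n)).filter fun p =>
        SatFormula p.2 p.1 ∧ p.1 ∈ S).card := by
      classical
      apply Finset.card_le_card_of_injOn (fun φ =>
        (φ, if h : ∃ a : Assignment n, SatFormula a φ then Classical.choose h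
            else fun _ => false))
      · intro φ hφ
        simp only [Finset.mem_coe, Finset.mem_filter, Finset.mem_univ, true_and]
        obtain h := hsat φ hφ
        refine ⟨?_, hφ⟩
        simp only [dif_pos h]
        exact Classical.choose_spec h
      · intro x _ y _ h
        exact congrArg Prod.fst h
    exact_mod_cast this
  -- planted bound gives A ≤ pγ * B
  have hBcard := card_pairs n k m
  have hBpos' : (0 : ℝ) <
      (((univ : Finset (Formula n k m × Assignment n)).filter fun p =>
          SatFormula p.2 p.1).card : ℝ) := by
    rw [hBcard]; exact_mod_cast hBpos
  have hA_le : (((univ : Finset (Formula n k m × Assignment n)).filter fun p =>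
          SatFormula p.2 p.1 ∧ p.1 ∈ S).card : ℝ)
      ≤ pγ * (2 ^ n * ((2*n) ^ k - n ^ k) ^ m : ℕ) := by
    have := (div_le_iff₀ hBpos').mp hplanted
    rw [hBcard] at this
    linarith
  -- analytic bound : B ≤ 2^n * exp(-m/2^k) * N
  have hanalytic : ((2 ^ n * ((2*n) ^ k - n ^ k) ^ m : ℕ) : ℝ)
      ≤ 2 ^ n * Real.exp (-(m : ℝ) / 2 ^ k) * N := by
    have hcast : (((2*n) ^ k - n ^ k : ℕ) : ℝ) = ((2*n : ℕ) : ℝ) ^ k - ((n : ℕ) : ℝ) ^ k := by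
      push_cast [Nat.cast_sub hnkle]
      ring
    have h2k : (0 : ℝ) < 2 ^ k := by positivity
    have hx1 : (1 : ℝ) / 2 ^ k ≤ 1 := by
      rw [div_le_one h2k]
      exact one_le_pow₀ (by norm_num)
    have hbase : ((2 : ℝ) * (n : ℝ)) ^ k - ((n : ℕ) : ℝ) ^ k
        = (1 - 1 / 2 ^ k) * (2 ^ k * (n : ℝ) ^ k) := by
      field_simp
      ring
    have hexp : (1 - 1 / (2:ℝ) ^ k) ≤ Real.exp (-(1 / 2 ^ k)) := by
      have := Real.add_one_le_exp (-(1 / (2:ℝ) ^ k))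
      linarith
    have hpow : ((1 : ℝ) - 1 / 2 ^ k) ^ m ≤ Real.exp (-(1 / (2:ℝ) ^ k)) ^ m :=
      pow_le_pow_left₀ (by linarith) hexp m
    have hexpm : Real.exp (-(1 / (2:ℝ) ^ k)) ^ m = Real.exp (-(m : ℝ) / 2 ^ k) := by
      rw [← Real.exp_nat_mul]
      congr 1
      ring
    have hNr : (N : ℝ) = (2 ^ k * (n : ℝ) ^ k) ^ m := by
      rw [hNval]; push_cast; ring
    push_cast [hcast]
    rw [hbase, mul_pow, hNr]
    have hnn : (0 : ℝ) ≤ (2 ^ k * (n:ℝ) ^ k) ^ m := by positivity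
    calc (2:ℝ) ^ n * ((1 - 1 / 2 ^ k) ^ m * (2 ^ k * (n:ℝ) ^ k) ^ m)
        ≤ 2 ^ n * (Real.exp (-(m : ℝ) / 2 ^ k) * (2 ^ k * (n:ℝ) ^ k) ^ m) := by
          apply mul_le_mul_of_nonneg_left _ (by positivity)
          apply mul_le_mul_of_nonneg_right _ hnn
          rw [← hexpm]; exact hpow
      _ = 2 ^ n * Real.exp (-(m : ℝ) / 2 ^ k) * (2 ^ k * (n:ℝ) ^ k) ^ m := by ring
  -- assemble
  have hmain : (S.card : ℝ) ≤ pγ * 2 ^ n * Real.exp (-(m : ℝ) / 2 ^ k) * N := by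
    calc (S.card : ℝ) ≤ _ := hS_le_A
      _ ≤ pγ * (2 ^ n * ((2*n) ^ k - n ^ k) ^ m : ℕ) := hA_le
      _ ≤ pγ * (2 ^ n * Real.exp (-(m : ℝ) / 2 ^ k) * N) :=
          mul_le_mul_of_nonneg_left hanalytic hpγ0
      _ = pγ * 2 ^ n * Real.exp (-(m : ℝ) / 2 ^ k) * N := by ring
  rw [hpsat, div_div_eq_mul_div, div_le_div_iff₀ hSatpos hSatpos]
  have hNr0 : (0 : ℝ) < (N : ℝ) := by exact_mod_cast hNpos
  calc (S.card : ℝ) * (Sat.card : ℝ)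
      ≤ (pγ * 2 ^ n * Real.exp (-(m : ℝ) / 2 ^ k) * N) * Sat.card :=
        mul_le_mul_of_nonneg_right hmain hSatpos.le
    _ = pγ * 2 ^ n * Real.exp (-(m : ℝ) / 2 ^ k) * N * Sat.card := by ring
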